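/- arXiv:1011.5206 — 6 statements merged into one kernel-verified Lean document; each statement's English description precedes it below -/
import Mathlib

section
/- Let f(x,y) = sqrt((x+y)^2+1) + sqrt(1-x^2)/2 + sqrt(1-y^2)/2 - 2 on [-1,1]^2. Then f(x,y) ≤ 1/2 for all x,y ∈ [-1,1]. -/
noncomputable def f (x y : ℝ) : ℝ :=
  Real.sqrt ((x + y) ^ 2 + 1) + Real.sqrt (1 - x ^ 2) / 2 + Real.sqrt (1 - y ^ 2) / 2 - 2

theorem stmt_0 (x y : ℝ) (hx : x ∈ Set.Icc (-1 : ℝ) 1) (hy : y ∈ Set.Icc (-1 : ℝ) 1) :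
    f x y ≤ 1 / 2 := by
  obtain ⟨hx1, hx2⟩ := hx
  obtain ⟨hy1, hy2⟩ := hy
  have hxx : (0:ℝ) ≤ 1 - x ^ 2 := by nlinarith
  have hyy : (0:ℝ) ≤ 1 - y ^ 2 := by nlinarith
  have ha := Real.sq_sqrt (show (0:ℝ) ≤ (x + y) ^ 2 + 1 by positivity)
  have hb := Real.sq_sqrt hxx
  have hc := Real.sq_sqrt hyy
  have ha0 := Real.sqrt_nonneg ((x + y) ^ 2 + 1)
  have hb0 := Real.sqrt_nonneg (1 - x ^ 2)
  have hc0 := Real.sqrt_nonneg (1 - y ^ 2)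
  unfold f
  nlinarith [sq_nonneg (Real.sqrt ((x + y) ^ 2 + 1) - 2),
    sq_nonneg (Real.sqrt (1 - x ^ 2) - 1/2),
    sq_nonneg (Real.sqrt (1 - y ^ 2) - 1/2),
    sq_nonneg (x - y)]
end

section
/- Let f(x,y) = sqrt((x+y)^2+1) + sqrt(1-x^2)/2 + sqrt(1-y^2)/2 - 2. For all a,b,c ∈ [-1,1] with a+b ≥ 0 and b+c ≤ 0, we have f(a,b) + f(b,c) ≤ 0.244. -/
set_option maxHeartbeats 1000000

private lemma tang (x X m : ℝ) (hm : 0 < m) (h : x ^ 2 ≤ X) : x ≤ (X + m ^ 2) / (2 * m) := by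
  rw [le_div_iff₀ (by linarith : (0:ℝ) < 2 * m)]
  nlinarith [sq_nonneg (x - m)]

private lemma hpolyA (a b : ℝ) (ha2 : a ≤ 1) (hab : 0 ≤ a + b) (hb1 : -1 ≤ b)
    (hA : b ≤ -(1/5)) :
    (a + b) * ((1 - b ^ 2 + (97/100) ^ 2) / (194/100) + (1 - a ^ 2 + 1/4)) ≤ a - b := by
  nlinarith [mul_nonneg hab (sub_nonneg.2 ha2), mul_nonneg hab (by linarith : (0:ℝ) ≤ -(1/5) - b),
    mul_nonneg (sub_nonneg.2 ha2) (by linarith : (0:ℝ) ≤ -(1/5) - b),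
    mul_nonneg (mul_nonneg hab (sub_nonneg.2 ha2)) (by linarith : (0:ℝ) ≤ -(1/5) - b),
    mul_nonneg (mul_nonneg hab hab) (sub_nonneg.2 ha2),
    mul_nonneg (mul_nonneg hab hab) (by linarith : (0:ℝ) ≤ -(1/5) - b),
    sq_nonneg (a + b), sq_nonneg (a - 7/10), mul_nonneg hab (sq_nonneg (a - 7/10)),
    mul_nonneg (by linarith : (0:ℝ) ≤ 1 + b) (sq_nonneg (a - 7/10))]

private lemma left_A (a b S1 P Q : ℝ) (ha2 : a ≤ 1) (hab : 0 ≤ a + b) (hb1 : -1 ≤ b)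
    (hA : b ≤ -(1/5)) (hS1sq : S1 ^ 2 = (a + b) ^ 2 + 1)
    (hP2 : P ^ 2 = 1 - a ^ 2) (hQ2 : Q ^ 2 = 1 - b ^ 2) (hPn : 0 ≤ P) (hQn : 0 ≤ Q) :
    S1 + P / 2 ≤ 1 + Q / 2 := by
  have h2S1 : 2 * (S1 - 1) ≤ (a + b) ^ 2 := by nlinarith [sq_nonneg (S1 - 1)]
  have hQ' := tang Q (1 - b ^ 2) (97/100) (by norm_num) (le_of_eq hQ2)
  have hP' := tang P (1 - a ^ 2) (1/2) (by norm_num) (le_of_eq hP2)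
  have hkey : (a + b) * (Q + P) ≤ a - b := by
    have hstep : (a + b) * (Q + P) ≤ (a + b) *
        ((1 - b ^ 2 + (97/100) ^ 2) / (194/100) + (1 - a ^ 2 + 1/4)) := by
      apply mul_le_mul_of_nonneg_left _ hab
      have e1 : (1 - b ^ 2 + (97/100) ^ 2) / (2 * (97/100))
          = (1 - b ^ 2 + (97/100) ^ 2) / (194/100) := by norm_num
      have e2 : (1 - a ^ 2 + (1/2) ^ 2) / (2 * (1/2)) = 1 - a ^ 2 + 1/4 := by ring
      rw [e1] at hQ'; rw [e2] at hP'
      linarith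
    linarith [hpolyA a b ha2 hab hb1 hA]
  have hs2 : (a + b) ^ 2 ≤ Q - P := by
    rcases lt_or_ge 0 (Q + P) with hPQ | hPQ
    · have h1 : (a + b) ^ 2 * (Q + P) ≤ (Q - P) * (Q + P) := by
        have h0 : (a + b) ^ 2 * (Q + P) ≤ (a + b) * (a - b) := by
          calc (a + b) ^ 2 * (Q + P) = (a + b) * ((a + b) * (Q + P)) := by ring
          _ ≤ (a + b) * (a - b) := mul_le_mul_of_nonneg_left hkey hab
        have h2 : (a + b) * (a - b) = (Q - P) * (Q + P) := by nlinarith [hP2, hQ2]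
        linarith
      exact (mul_le_mul_iff_of_pos_right hPQ).1 h1
    · have hQ0 : Q = 0 := le_antisymm (by linarith) hQn
      have hP0 : P = 0 := le_antisymm (by linarith) hPn
      have hb' : b = -1 := by nlinarith [hQ0, hQ2]
      have ha' : a = 1 := by nlinarith [hP0, hP2]
      rw [hQ0, hP0, ha', hb']; norm_num
  linarith

private lemma right_59 (b c S2 R : ℝ) (hS2sq : S2 ^ 2 = (b + c) ^ 2 + 1)
    (hR2 : R ^ 2 = 1 - c ^ 2) : (2 * (S2 + R / 2)) ^ 2 ≤ 13 * b ^ 2 + 1495/126 := by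
  nlinarith [sq_nonneg (9 * S2 - 28 * R), sq_nonneg (5 * c - 9 * b)]

private lemma right_14 (b c S2 R : ℝ) (hS2sq : S2 ^ 2 = (b + c) ^ 2 + 1)
    (hR2 : R ^ 2 = 1 - c ^ 2) : (2 * (S2 + R / 2)) ^ 2 ≤ 24 * b ^ 2 + 54/5 := by
  nlinarith [sq_nonneg (2 * S2 - 5 * R), sq_nonneg (c - 4 * b)]

private lemma left_B1 (a b S1 P : ℝ) (ha2 : a ≤ 1) (hab : 0 ≤ a + b) (hb1' : -1 ≤ b)
    (hS1sq : S1 ^ 2 = (a + b) ^ 2 + 1) (hP2 : P ^ 2 = 1 - a ^ 2)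
    (hcase : 7/4 - 3/4 * b ^ 2 ≤ b ^ 2 + 2 * b + 2) :
    (S1 + P / 2) ^ 2 ≤ 4/3 * (b ^ 2 + 2 * b + 2) := by
  nlinarith [sq_nonneg (2 * S1 - 3 * P),
    mul_nonneg (mul_nonneg (by linarith : (0:ℝ) ≤ 1 + b) (by linarith : (0:ℝ) ≤ 1 - a)) hab,
    mul_nonneg (by linarith : (0:ℝ) ≤ 1 - a)
      (by linarith : (0:ℝ) ≤ b ^ 2 + 2 * b + 2 - (7/4 - 3/4 * b ^ 2))]

private lemma left_B2 (a b S1 P : ℝ) (ha2 : a ≤ 1) (hab : 0 ≤ a + b)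
    (hS1sq : S1 ^ 2 = (a + b) ^ 2 + 1) (hP2 : P ^ 2 = 1 - a ^ 2)
    (hcase : b ^ 2 + 2 * b + 2 ≤ 7/4 - 3/4 * b ^ 2) :
    (S1 + P / 2) ^ 2 ≤ 4/3 * (7/4 - 3/4 * b ^ 2) := by
  nlinarith [sq_nonneg (2 * S1 - 3 * P),
    mul_nonneg hab (by linarith : (0:ℝ) ≤ 1 - a),
    mul_nonneg hab (by linarith : (0:ℝ) ≤ 7/4 - 3/4 * b ^ 2 - (b ^ 2 + 2 * b + 2))]

private lemma left_C (a b S1 P : ℝ) (hab : 0 ≤ a + b) (hb0 : b ≤ 0)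
    (hS1sq : S1 ^ 2 = (a + b) ^ 2 + 1) (hP2 : P ^ 2 = 1 - a ^ 2) :
    (S1 + P / 2) ^ 2 ≤ 5/4 * (2 - b ^ 2) := by
  nlinarith [sq_nonneg (S1 - 2 * P), mul_nonpos_of_nonpos_of_nonneg hb0 hab]

private lemma finalA (S1 P S2 R Q w : ℝ) (h1 : S1 + P / 2 ≤ 1 + Q / 2)
    (h2 : (2 * (S2 + R / 2)) ^ 2 ≤ 13 * w + 1495/126)
    (h3 : Q ^ 2 = 1 - w) (hw1 : 1/25 ≤ w) (hw2 : w ≤ 1) :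
    S1 + P / 2 + Q / 2 - 2 + (S2 + Q / 2 + R / 2 - 2) ≤ 0.244 := by
  have t2 := tang (2 * (S2 + R / 2)) (13 * w + 1495/126) (23/6) (by norm_num) h2
  have t3 := tang Q (1 - w) (221/250) (by norm_num) (le_of_eq h3)
  norm_num only at t2 t3 ⊢
  linarith

private lemma finalB1 (b S1 P S2 R Q : ℝ) (h1 : (S1 + P / 2) ^ 2 ≤ 4/3 * (b ^ 2 + 2 * b + 2))
    (h2 : (2 * (S2 + R / 2)) ^ 2 ≤ 24 * b ^ 2 + 54/5)
    (h3 : Q ^ 2 = 1 - b ^ 2) (hb1 : -(1/5) ≤ b) (hb2 : b ≤ -(1/10)) :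
    S1 + P / 2 + Q / 2 - 2 + (S2 + Q / 2 + R / 2 - 2) ≤ 0.244 := by
  have t1 := tang (S1 + P / 2) _ (303/200) (by norm_num) h1
  have t2 := tang (2 * (S2 + R / 2)) _ (337/100) (by norm_num) h2
  have t3 := tang Q (1 - b ^ 2) (9887/10000) (by norm_num) (le_of_eq h3)
  norm_num only at t1 t2 t3 ⊢
  nlinarith [mul_nonneg (by linarith : (0:ℝ) ≤ b + 1/5) (by linarith : (0:ℝ) ≤ -(1/10) - b)]

private lemma finalB2 (b S1 P S2 R Q : ℝ) (h1 : (S1 + P / 2) ^ 2 ≤ 4/3 * (7/4 - 3/4 * b ^ 2))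
    (h2 : (2 * (S2 + R / 2)) ^ 2 ≤ 24 * b ^ 2 + 54/5)
    (h3 : Q ^ 2 = 1 - b ^ 2) (hb1 : -(1/5) ≤ b) (hb2 : b ≤ -(1/10)) :
    S1 + P / 2 + Q / 2 - 2 + (S2 + Q / 2 + R / 2 - 2) ≤ 0.244 := by
  have t1 := tang (S1 + P / 2) _ (152/100) (by norm_num) h1
  have t2 := tang (2 * (S2 + R / 2)) _ (337/100) (by norm_num) h2
  have t3 := tang Q (1 - b ^ 2) (9887/10000) (by norm_num) (le_of_eq h3)
  norm_num only at t1 t2 t3 ⊢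
  nlinarith [mul_nonneg (by linarith : (0:ℝ) ≤ b + 1/5) (by linarith : (0:ℝ) ≤ -(1/10) - b)]

private lemma finalC (b S1 P S2 R Q : ℝ) (h1 : (S1 + P / 2) ^ 2 ≤ 5/4 * (2 - b ^ 2))
    (h2 : (2 * (S2 + R / 2)) ^ 2 ≤ 24 * b ^ 2 + 54/5)
    (h3 : Q ^ 2 = 1 - b ^ 2) (hb1 : -(1/10) ≤ b) (hb2 : b ≤ 0) :
    S1 + P / 2 + Q / 2 - 2 + (S2 + Q / 2 + R / 2 - 2) ≤ 0.244 := by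
  have t1 := tang (S1 + P / 2) _ (79/50) (by norm_num) h1
  have t2 := tang (2 * (S2 + R / 2)) _ (661/200) (by norm_num) h2
  have t3 := tang Q (1 - b ^ 2) (399/400) (by norm_num) (le_of_eq h3)
  have hw : b ^ 2 ≤ 1/100 := by
    nlinarith [mul_nonneg (by linarith : (0:ℝ) ≤ b + 1/10) (by linarith : (0:ℝ) ≤ -b)]
  norm_num only at t1 t2 t3 ⊢
  linarith

private lemma key (a b c : ℝ) (ha1 : -1 ≤ a) (ha2 : a ≤ 1) (hb1 : -1 ≤ b) (hb2 : b ≤ 1)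
    (hc1 : -1 ≤ c) (hc2 : c ≤ 1) (hab : a + b ≥ 0) (hbc : b + c ≤ 0) (hb0 : b ≤ 0) :
    f a b + f b c ≤ 0.244 := by
  have hPa : (0:ℝ) ≤ 1 - a ^ 2 := by nlinarith
  have hQb : (0:ℝ) ≤ 1 - b ^ 2 := by nlinarith
  have hRc : (0:ℝ) ≤ 1 - c ^ 2 := by nlinarith
  have hab' : (0:ℝ) ≤ a + b := hab
  unfold f
  set S1 := Real.sqrt ((a + b) ^ 2 + 1) with hS1def
  set P := Real.sqrt (1 - a ^ 2) with hPdef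
  set Q := Real.sqrt (1 - b ^ 2) with hQdef
  set S2 := Real.sqrt ((b + c) ^ 2 + 1) with hS2def
  set R := Real.sqrt (1 - c ^ 2) with hRdef
  have hS1sq : S1 ^ 2 = (a + b) ^ 2 + 1 := Real.sq_sqrt (by positivity)
  have hS2sq : S2 ^ 2 = (b + c) ^ 2 + 1 := Real.sq_sqrt (by positivity)
  have hP2 : P ^ 2 = 1 - a ^ 2 := Real.sq_sqrt hPa
  have hQ2 : Q ^ 2 = 1 - b ^ 2 := Real.sq_sqrt hQb
  have hR2 : R ^ 2 = 1 - c ^ 2 := Real.sq_sqrt hRc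
  have hPn : 0 ≤ P := Real.sqrt_nonneg _
  have hQn : 0 ≤ Q := Real.sqrt_nonneg _
  rcases le_or_gt b (-(1/5 : ℝ)) with hA | hA
  · have h1 := left_A a b S1 P Q ha2 hab' hb1 hA hS1sq hP2 hQ2 hPn hQn
    have h2 := right_59 b c S2 R hS2sq hR2
    have hw1 : 1/25 ≤ b ^ 2 := by nlinarith [mul_nonneg (by linarith : (0:ℝ) ≤ -(1/5) - b) (by linarith : (0:ℝ) ≤ -(1/5) - b)]
    have hw2 : b ^ 2 ≤ 1 := by nlinarith [mul_nonneg (by linarith : (0:ℝ) ≤ 1 + b) (by linarith : (0:ℝ) ≤ -b)]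
    exact finalA S1 P S2 R Q (b ^ 2) h1 h2 hQ2 hw1 hw2
  · have h2 := right_14 b c S2 R hS2sq hR2
    rcases le_or_gt b (-(1/10 : ℝ)) with hB | hB
    · rcases le_total (7/4 - 3/4 * b ^ 2) (b ^ 2 + 2 * b + 2) with hcase | hcase
      · have h1 := left_B1 a b S1 P ha2 hab' hb1 hS1sq hP2 hcase
        exact finalB1 b S1 P S2 R Q h1 h2 hQ2 (by linarith) hB
      · have h1 := left_B2 a b S1 P ha2 hab' hS1sq hP2 hcase
        exact finalB2 b S1 P S2 R Q h1 h2 hQ2 (by linarith) hB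
    · have h1 := left_C a b S1 P hab' hb0 hS1sq hP2
      exact finalC b S1 P S2 R Q h1 h2 hQ2 (by linarith) hb0

theorem stmt_1 (a b c : ℝ) (ha : a ∈ Set.Icc (-1 : ℝ) 1) (hb : b ∈ Set.Icc (-1 : ℝ) 1)
    (hc : c ∈ Set.Icc (-1 : ℝ) 1) (hab : a + b ≥ 0) (hbc : b + c ≤ 0) :
    f a b + f b c ≤ 0.244 := by
  obtain ⟨ha1, ha2⟩ := ha
  obtain ⟨hb1, hb2⟩ := hb
  obtain ⟨hc1, hc2⟩ := hc
  rcases le_or_gt b 0 with hb0 | hb0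
  · exact key a b c ha1 ha2 hb1 hb2 hc1 hc2 hab hbc hb0
  · have h := key (-c) (-b) (-a) (by linarith) (by linarith) (by linarith) (by linarith)
      (by linarith) (by linarith) (by linarith) (by linarith) (by linarith)
    have he : f (-c) (-b) + f (-b) (-a) = f a b + f b c := by
      unfold f
      rw [show (-c + -b) ^ 2 = (b + c) ^ 2 by ring, show (-b + -a) ^ 2 = (a + b) ^ 2 by ring,
        show 1 - (-c) ^ 2 = 1 - c ^ 2 by ring, show 1 - (-b) ^ 2 = 1 - b ^ 2 by ring,
        show 1 - (-a) ^ 2 = 1 - a ^ 2 by ring]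
      ring
    linarith
end

section
/- For all c₃ ∈ [-1,1], f(1,c₃) + f(c₃,-1) < 0, where f(x,y) = sqrt((x+y)^2+1) + sqrt(1-x^2)/2 + sqrt(1-y^2)/2 - 2. -/
lemma sqrt_tangent (t k : ℝ) (ht : 0 ≤ t) (hk : 0 < k) :
    Real.sqrt t ≤ t / (2 * k) + k / 2 := by
  have hmul : Real.sqrt t * (2 * k) ≤ t + k ^ 2 := by
    nlinarith [Real.sq_sqrt ht, sq_nonneg (Real.sqrt t - k)]
  have h2k : (0:ℝ) < 2 * k := by linarith
  rw [div_add' _ _ _ (ne_of_gt h2k), le_div_iff₀ h2k]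
  nlinarith

theorem stmt_5 (c₃ : ℝ) (h : c₃ ∈ Set.Icc (-1 : ℝ) 1) : f 1 c₃ + f c₃ (-1) < 0 := by
  obtain ⟨h1, h2⟩ := h
  have hs2 : (0:ℝ) ≤ 1 - c₃ ^ 2 := by nlinarith
  have e0 : Real.sqrt (1 - (1:ℝ) ^ 2) = 0 := by norm_num
  have e1 : Real.sqrt (1 - (-1:ℝ) ^ 2) = 0 := by norm_num
  have b1 := sqrt_tangent ((1 + c₃) ^ 2 + 1) (31/20) (by positivity) (by norm_num)
  have b2 := sqrt_tangent ((c₃ + -1) ^ 2 + 1) (31/20) (by positivity) (by norm_num)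
  have b3 := sqrt_tangent (1 - c₃ ^ 2) (31/40) hs2 (by norm_num)
  simp only [f, e0, e1]
  norm_num at b1 b2 b3 ⊢
  nlinarith [b1, b2, b3]
end

section
/- For any two d×d Hermitian positive semidefinite matrices A and B with eigenvalues λ^A and λ^B (each listed with multiplicity), there exists a permutation π of {1,…,d} such that Tr(A B) ≤ ∑_j λ^A_{π(j)} λ^B_j. -/
open scoped ComplexOrder
open Matrix Finset

private lemma trace_diag_conj {d : ℕ} (a b : Fin d → ℂ) (K : Matrix (Fin d) (Fin d) ℂ) :
    (Matrix.diagonal a * K * Matrix.diagonal b * star K).trace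
      = ∑ i, ∑ j, a i * b j * (K i j * star (K i j)) := by
  simp [Matrix.trace, Matrix.mul_apply, Matrix.diagonal_apply, Matrix.conjTranspose_apply,
    ite_mul, mul_ite, Finset.mul_sum, Finset.sum_mul]
  congr 1; ext i; congr 1; ext j; ring

theorem stmt_8 (d : ℕ) (A B : Matrix (Fin d) (Fin d) ℂ)
    (hA : A.IsHermitian) (hB : B.IsHermitian)
    (hA' : A.PosSemidef) (hB' : B.PosSemidef) :
    ∃ π : Equiv.Perm (Fin d),
      ((A * B).trace).re ≤ ∑ j, hA.eigenvalues (π j) * hB.eigenvalues j := by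
  set U := hA.eigenvectorUnitary with hU_def
  set V := hB.eigenvectorUnitary with hV_def
  set K : Matrix (Fin d) (Fin d) ℂ := star (U : Matrix (Fin d) (Fin d) ℂ) * V with hK_def
  have hUU : (U : Matrix (Fin d) (Fin d) ℂ) * star (U : Matrix (Fin d) (Fin d) ℂ) = 1 :=
    mem_unitaryGroup_iff.mp U.2
  have hUU' : star (U : Matrix (Fin d) (Fin d) ℂ) * (U : Matrix (Fin d) (Fin d) ℂ) = 1 :=
    mem_unitaryGroup_iff'.mp U.2
  have hVV : (V : Matrix (Fin d) (Fin d) ℂ) * star (V : Matrix (Fin d) (Fin d) ℂ) = 1 :=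
    mem_unitaryGroup_iff.mp V.2
  have hVV' : star (V : Matrix (Fin d) (Fin d) ℂ) * (V : Matrix (Fin d) (Fin d) ℂ) = 1 :=
    mem_unitaryGroup_iff'.mp V.2
  -- the key unitary conjugation identity
  have hAB : A * B = (U : Matrix (Fin d) (Fin d) ℂ) *
      (Matrix.diagonal (RCLike.ofReal ∘ hA.eigenvalues) * K *
        Matrix.diagonal (RCLike.ofReal ∘ hB.eigenvalues) * star K) *
      star (U : Matrix (Fin d) (Fin d) ℂ) := by
    conv_lhs => rw [hA.spectral_theorem, hB.spectral_theorem]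
    simp only [Unitary.conjStarAlgAut_apply, ← hU_def, ← hV_def, hK_def, Matrix.star_mul, star_star, Matrix.mul_assoc, hUU, Matrix.mul_one]
  have htrace : ((A * B).trace).re
      = ∑ i, ∑ j, hA.eigenvalues i * hB.eigenvalues j * Complex.normSq (K i j) := by
    rw [hAB, Matrix.trace_mul_cycle, ← Matrix.mul_assoc, hUU', Matrix.one_mul, trace_diag_conj]
    simp only [Function.comp_apply, RCLike.star_def, Complex.mul_conj]
    have hcast : (RCLike.ofReal : ℝ → ℂ) = Complex.ofReal := rfl
    simp only [hcast, ← Complex.ofReal_mul, ← Complex.ofReal_sum, Complex.ofReal_re]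
  -- K is unitary
  have hKK : K * star K = 1 := by
    rw [hK_def, Matrix.star_mul, star_star, Matrix.mul_assoc, ← Matrix.mul_assoc (V : Matrix (Fin d) (Fin d) ℂ), hVV, Matrix.one_mul, hUU']
  have hKK' : star K * K = 1 := by
    rw [hK_def, Matrix.star_mul, star_star, Matrix.mul_assoc, ← Matrix.mul_assoc (U : Matrix (Fin d) (Fin d) ℂ), hUU, Matrix.one_mul, hVV']
  -- S is doubly stochastic
  set S : Matrix (Fin d) (Fin d) ℝ := Matrix.of fun i j => Complex.normSq (K i j) with hS_def
  have hSrow : ∀ i, ∑ j, S i j = 1 := by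
    intro i
    have h := congrFun (congrFun hKK i) i
    simp only [Matrix.mul_apply, Matrix.one_apply_eq, Matrix.conjTranspose_apply] at h
    have : ∑ j, ((Complex.normSq (K i j) : ℂ)) = 1 := by
      rw [← h]; congr 1; ext j
      simp [Matrix.conjTranspose_apply, Complex.mul_conj]
    exact_mod_cast this
  have hScol : ∀ j, ∑ i, S i j = 1 := by
    intro j
    have h := congrFun (congrFun hKK' j) j
    simp only [Matrix.mul_apply, Matrix.one_apply_eq, Matrix.conjTranspose_apply] at h
    have : ∑ i, ((Complex.normSq (K i j) : ℂ)) = 1 := by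
      rw [← h]; congr 1; ext i
      simp [Matrix.conjTranspose_apply, Complex.mul_conj, mul_comm]
    exact_mod_cast this
  have hS : S ∈ doublyStochastic ℝ (Fin d) :=
    mem_doublyStochastic_iff_sum.mpr ⟨fun i j => Complex.normSq_nonneg _, hSrow, hScol⟩
  obtain ⟨w, hw0, hw1, hwS⟩ := exists_eq_sum_perm_of_mem_doublyStochastic hS
  -- rewrite the trace as convex combination
  have hT : ((A * B).trace).re
      = ∑ σ : Equiv.Perm (Fin d), w σ * ∑ i, hA.eigenvalues i * hB.eigenvalues (σ i) := by
    rw [htrace]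
    have hSentry : ∀ i j, S i j = ∑ σ : Equiv.Perm (Fin d),
        w σ * (if σ i = j then (1:ℝ) else 0) := by
      intro i j
      rw [← hwS]
      simp [Matrix.sum_apply, Equiv.Perm.permMatrix, PEquiv.toMatrix_apply,
        Equiv.toPEquiv_apply]
    calc ∑ i, ∑ j, hA.eigenvalues i * hB.eigenvalues j * Complex.normSq (K i j)
        = ∑ i, ∑ j, ∑ σ : Equiv.Perm (Fin d),
            w σ * (hA.eigenvalues i * hB.eigenvalues j * (if σ i = j then (1:ℝ) else 0)) := by
          refine Finset.sum_congr rfl fun i _ => Finset.sum_congr rfl fun j _ => ?_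
          have : Complex.normSq (K i j) = S i j := rfl
          rw [this, hSentry i j, Finset.mul_sum]
          refine Finset.sum_congr rfl fun σ _ => by ring
      _ = ∑ σ : Equiv.Perm (Fin d), w σ * ∑ i, hA.eigenvalues i * hB.eigenvalues (σ i) := by
          calc ∑ i, ∑ j, ∑ σ : Equiv.Perm (Fin d),
                  w σ * (hA.eigenvalues i * hB.eigenvalues j * (if σ i = j then (1:ℝ) else 0))
              = ∑ i, ∑ σ : Equiv.Perm (Fin d), ∑ j,
                  w σ * (hA.eigenvalues i * hB.eigenvalues j * (if σ i = j then (1:ℝ) else 0)) :=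
                Finset.sum_congr rfl fun i _ => Finset.sum_comm
            _ = ∑ σ : Equiv.Perm (Fin d), ∑ i, ∑ j,
                  w σ * (hA.eigenvalues i * hB.eigenvalues j * (if σ i = j then (1:ℝ) else 0)) :=
                Finset.sum_comm
            _ = ∑ σ : Equiv.Perm (Fin d), w σ * ∑ i, hA.eigenvalues i * hB.eigenvalues (σ i) := by
                refine Finset.sum_congr rfl fun σ _ => ?_
                rw [Finset.mul_sum]
                refine Finset.sum_congr rfl fun i _ => ?_
                simp [mul_ite, Finset.sum_ite_eq]
  -- pick maximizing permutation
  obtain ⟨σ₀, -, hσ₀⟩ := Finset.exists_max_image Finset.univ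
    (fun σ : Equiv.Perm (Fin d) => ∑ i, hA.eigenvalues i * hB.eigenvalues (σ i))
    ⟨1, Finset.mem_univ 1⟩
  refine ⟨σ₀⁻¹, ?_⟩
  have hπ : ∑ j, hA.eigenvalues (σ₀⁻¹ j) * hB.eigenvalues j
      = ∑ i, hA.eigenvalues i * hB.eigenvalues (σ₀ i) := by
    rw [← Equiv.sum_comp σ₀ (fun j => hA.eigenvalues (σ₀⁻¹ j) * hB.eigenvalues j)]
    simp
  rw [hπ, hT]
  calc ∑ σ : Equiv.Perm (Fin d), w σ * ∑ i, hA.eigenvalues i * hB.eigenvalues (σ i)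
      ≤ ∑ σ : Equiv.Perm (Fin d), w σ * ∑ i, hA.eigenvalues i * hB.eigenvalues (σ₀ i) :=
        Finset.sum_le_sum fun σ _ => mul_le_mul_of_nonneg_left (hσ₀ σ (Finset.mem_univ σ)) (hw0 σ)
    _ = ∑ i, hA.eigenvalues i * hB.eigenvalues (σ₀ i) := by rw [← Finset.sum_mul, hw1, one_mul]
end

section
/- For all a, x, z ∈ ℝ satisfying x² = a² + 2a + 2, z² = 1 - a², and -1 ≤ a ≤ 1 with x ≥ 0 and z ≥ 0, we have x + z/2 - 2 ≤ 0.368. -/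
theorem stmt_16 (a x z : ℝ) (hx : x ^ 2 = a ^ 2 + 2 * a + 2) (hz : z ^ 2 = 1 - a ^ 2)
    (ha : a ∈ Set.Icc (-1 : ℝ) 1) (hx0 : 0 ≤ x) (hz0 : 0 ≤ z) :
    x + z / 2 - 2 ≤ 0.368 := by
  obtain ⟨h1, h2⟩ := ha
  nlinarith [sq_nonneg (x - 2.1205), sq_nonneg (z - 0.49324), sq_nonneg (a - 0.8699), sq_nonneg (a+1), sq_nonneg (1-a)]
end

section
/- For any d×d real symmetric matrix M, the orthogonal projection P onto the positive eigenspace of M maximizes Tr(A·M) over all d×d orthogonal projection matrices A; that is, for every symmetric idempotent A, Tr(A·M) ≤ Tr(P·M) = ∑ over positive eigenvalues of M. -/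
open Matrix

private lemma diag_tmul_nonneg {d : ℕ} (C : Matrix (Fin d) (Fin d) ℝ) (i : Fin d) :
    0 ≤ (Cᵀ * C) i i := by
  rw [Matrix.mul_apply]
  exact Finset.sum_nonneg fun j _ => by simp [Matrix.transpose_apply, mul_self_nonneg]

theorem stmt_17 (d : ℕ) (M : Matrix (Fin d) (Fin d) ℝ) (hM : M.IsHermitian) :
    ∃ P : Matrix (Fin d) (Fin d) ℝ,
      Pᵀ = P ∧ P * P = P ∧ P * M = M * P ∧
      (∀ A : Matrix (Fin d) (Fin d) ℝ, Aᵀ = A → A * A = A → (A * M).trace ≤ (P * M).trace) ∧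
      (P * M).trace = ∑ i, if 0 < hM.eigenvalues i then hM.eigenvalues i else 0 := by
  classical
  set U : Matrix (Fin d) (Fin d) ℝ := (hM.eigenvectorUnitary : Matrix (Fin d) (Fin d) ℝ) with hUdef
  set lam := hM.eigenvalues with hlam
  have hCT : ∀ N : Matrix (Fin d) (Fin d) ℝ, Nᴴ = Nᵀ := fun N => by
    ext i j; simp [Matrix.conjTranspose_apply]
  have hU1 : Uᴴ * U = 1 := by
    simpa [hUdef, star_eq_conjTranspose] using Unitary.coe_star_mul_self hM.eigenvectorUnitary
  have hspec : M = U * diagonal lam * Uᴴ := by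
    have := hM.spectral_theorem
    simpa [hUdef, star_eq_conjTranspose, Function.comp] using this
  set D : Matrix (Fin d) (Fin d) ℝ := diagonal (fun i => if 0 < lam i then (1:ℝ) else 0) with hD
  have key : ∀ X Y : Matrix (Fin d) (Fin d) ℝ,
      (U * X * Uᴴ) * (U * Y * Uᴴ) = U * (X * Y) * Uᴴ := by
    intro X Y
    calc (U * X * Uᴴ) * (U * Y * Uᴴ) = U * X * (Uᴴ * U) * (Y * Uᴴ) := by
          simp only [Matrix.mul_assoc]
    _ = U * (X * Y) * Uᴴ := by rw [hU1]; simp only [Matrix.mul_one, Matrix.mul_assoc]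
  have hDh : Dᴴ = D := by
    rw [hD, Matrix.diagonal_conjTranspose]
    refine congrArg diagonal ?_
    funext i
    simp only [Pi.star_apply]
    split <;> simp
  have hDD : D * D = D := by
    rw [hD, Matrix.diagonal_mul_diagonal]
    refine congrArg diagonal ?_
    funext i
    split <;> simp
  have hDL : D * diagonal lam = diagonal lam * D := by
    rw [hD, Matrix.diagonal_mul_diagonal, Matrix.diagonal_mul_diagonal]
    refine congrArg diagonal ?_
    funext i; ring
  have htrD : (D * diagonal lam).trace = ∑ i, (if 0 < lam i then lam i else 0) := by
    rw [hD, Matrix.diagonal_mul_diagonal, Matrix.trace_diagonal]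
    refine Finset.sum_congr rfl fun i _ => ?_
    split <;> simp
  have htrP : (U * D * Uᴴ * M).trace = ∑ i, (if 0 < lam i then lam i else 0) := by
    rw [hspec, key, Matrix.trace_mul_comm, ← Matrix.mul_assoc, hU1, Matrix.one_mul, htrD]
  refine ⟨U * D * Uᴴ, ?_, ?_, ?_, ?_, htrP⟩
  · rw [← hCT]
    simp only [Matrix.conjTranspose_mul, Matrix.conjTranspose_conjTranspose, hDh,
      Matrix.mul_assoc]
  · rw [key, hDD]
  · rw [hspec, key, key, hDL]
  · intro A hAT hAA
    rw [htrP]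
    set B : Matrix (Fin d) (Fin d) ℝ := Uᴴ * A * U with hB
    have htrA : (A * M).trace = ∑ i, B i i * lam i := by
      rw [hspec, show A * (U * diagonal lam * Uᴴ) = A * U * diagonal lam * Uᴴ by
        simp only [Matrix.mul_assoc],
        Matrix.trace_mul_comm, ← Matrix.mul_assoc, ← Matrix.mul_assoc]
      simp [hB, Matrix.trace, Matrix.diag, Matrix.mul_diagonal, Matrix.mul_assoc]
    rw [htrA]
    have hB0 : ∀ i, 0 ≤ B i i := by
      intro i
      have : B = (A * U)ᵀ * (A * U) := by
        rw [← hCT, Matrix.conjTranspose_mul, hCT A, hAT, hB,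
          show Uᴴ * A * (A * U) = Uᴴ * (A * A) * U by simp only [Matrix.mul_assoc], hAA]
      rw [this]; exact diag_tmul_nonneg _ i
    have hB1 : ∀ i, B i i ≤ 1 := by
      intro i
      have h1 : ((1 - A) * U)ᵀ * ((1 - A) * U) = 1 - B := by
        rw [← hCT, Matrix.conjTranspose_mul, hCT (1 - A)]
        have hAT' : (1 - A)ᵀ = 1 - A := by rw [Matrix.transpose_sub, hAT, Matrix.transpose_one]
        have hAA' : (1 - A) * (1 - A) = 1 - A := by
          simp [Matrix.sub_mul, Matrix.mul_sub, hAA]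
        rw [hAT', show Uᴴ * (1 - A) * ((1 - A) * U) = Uᴴ * ((1 - A) * (1 - A)) * U by
          simp only [Matrix.mul_assoc], hAA',
          Matrix.mul_sub, Matrix.mul_one, Matrix.sub_mul, hU1, hB, Matrix.mul_assoc]
      have := diag_tmul_nonneg ((1 - A) * U) i
      rw [h1] at this
      simp only [Matrix.sub_apply, Matrix.one_apply_eq] at this
      linarith
    apply Finset.sum_le_sum
    intro i _
    by_cases h : 0 < lam i
    · simp only [h, if_pos]
      calc B i i * lam i ≤ 1 * lam i := mul_le_mul_of_nonneg_right (hB1 i) h.le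
      _ = lam i := one_mul _
    · simp only [h, if_neg, not_false_iff]
      push_neg at h
      exact mul_nonpos_of_nonneg_of_nonpos (hB0 i) h
end
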